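/- Let X be a metric space and φ : ℝ → X → X a continuous flow. Let C ⊆ X be a compact set, K⁻ := {x | ∀ t ≥ 0, φ t x ∈ C}, K⁺ := {x | ∀ t ≤ 0, φ t x ∈ C}, and K := K⁻ ∩ K⁺. If x ∈ K⁻, then dist(φ t x, K) → 0 as t → +∞. -/

import Mathlib

/-- A forward-trapped point of a continuous flow converges to the trapped set
`K = K⁻ ∩ K⁺`: `dist(φ t x, K) → 0` as `t → +∞`. -/
theorem forward_trapped_converges_to_trapped_set
    {X : Type*} [MetricSpace X] (φ : ℝ → X → X)
    (hcont : Continuous fun p : ℝ × X => φ p.1 p.2)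
    (h0 : ∀ x, φ 0 x = x)
    (hadd : ∀ s t : ℝ, ∀ x : X, φ (s + t) x = φ s (φ t x))
    (C : Set X) (hC : IsCompact C)
    (Kminus Kplus K : Set X)
    (hKminus : Kminus = {x : X | ∀ t : ℝ, 0 ≤ t → φ t x ∈ C})
    (hKplus : Kplus = {x : X | ∀ t : ℝ, t ≤ 0 → φ t x ∈ C})
    (hK : K = Kminus ∩ Kplus)
    (x : X) (hx : x ∈ Kminus) :
    Filter.Tendsto (fun t : ℝ => Metric.infDist (φ t x) K)
      Filter.atTop (nhds 0) := by
  subst hKminus hKplus hK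
  have hx' : ∀ t : ℝ, 0 ≤ t → φ t x ∈ C := hx
  by_contra hcon
  rw [Metric.tendsto_nhds] at hcon
  push_neg at hcon
  obtain ⟨ε, hε, hfreq⟩ := hcon
  have hfreq' : ∀ n : ℕ, ∃ b : ℝ, (n : ℝ) ≤ b ∧
      ε ≤ Metric.infDist (φ b x) ({x : X | ∀ t : ℝ, 0 ≤ t → φ t x ∈ C} ∩
        {x : X | ∀ t : ℝ, t ≤ 0 → φ t x ∈ C}) := by
    intro n
    obtain ⟨b, hb, hbe⟩ := Filter.frequently_atTop.mp hfreq (n : ℝ)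
    refine ⟨b, hb, ?_⟩
    rw [Real.dist_eq, sub_zero, abs_of_nonneg Metric.infDist_nonneg] at hbe
    linarith
  choose t ht hte using hfreq'
  have htnn : ∀ n : ℕ, (0 : ℝ) ≤ t n := fun n =>
    le_trans (Nat.cast_nonneg n) (ht n)
  have htC : ∀ n : ℕ, φ (t n) x ∈ C := fun n => hx' _ (htnn n)
  obtain ⟨y, hyC, ψ, hψ, hlim⟩ := hC.tendsto_subseq htC
  -- t (ψ n) → ∞
  have hs_tendsto : Filter.Tendsto (fun n : ℕ => t (ψ n)) Filter.atTop Filter.atTop := by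
    apply Filter.tendsto_atTop_mono (fun n : ℕ => ?_) tendsto_natCast_atTop_atTop
    calc (n : ℝ) ≤ (ψ n : ℝ) := Nat.cast_le.mpr (hψ.le_apply)
    _ ≤ t (ψ n) := ht (ψ n)
  -- for each s, φ s (φ (t (ψ n)) x) → φ s y
  have hkey : ∀ s : ℝ, Filter.Tendsto (fun n : ℕ => φ s (φ (t (ψ n)) x))
      Filter.atTop (nhds (φ s y)) := by
    intro s
    have hcs : Continuous fun z : X => φ s z :=
      hcont.comp (continuous_const.prodMk continuous_id)
    exact (hcs.tendsto y).comp hlim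
  -- y ∈ C forward and backward
  have hyK : ∀ s : ℝ, φ s y ∈ C := by
    intro s
    refine hC.isClosed.mem_of_tendsto (hkey s) ?_
    filter_upwards [hs_tendsto.eventually_ge_atTop (-s)] with n hn
    have : φ s (φ (t (ψ n)) x) = φ (s + t (ψ n)) x := (hadd s (t (ψ n)) x).symm
    rw [this]
    exact hx' _ (by linarith)
  have hyK' : y ∈ {x : X | ∀ t : ℝ, 0 ≤ t → φ t x ∈ C} ∩
      {x : X | ∀ t : ℝ, t ≤ 0 → φ t x ∈ C} :=
    ⟨fun s _ => hyK s, fun s _ => hyK s⟩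
  -- contradiction via continuity of infDist
  have hilim : Filter.Tendsto
      (fun n : ℕ => Metric.infDist (φ (t (ψ n)) x)
        ({x : X | ∀ t : ℝ, 0 ≤ t → φ t x ∈ C} ∩ {x : X | ∀ t : ℝ, t ≤ 0 → φ t x ∈ C}))
      Filter.atTop (nhds (Metric.infDist y
        ({x : X | ∀ t : ℝ, 0 ≤ t → φ t x ∈ C} ∩ {x : X | ∀ t : ℝ, t ≤ 0 → φ t x ∈ C}))) :=
    ((Metric.continuous_infDist_pt _).tendsto y).comp hlim
  have hge : ε ≤ Metric.infDist y
      ({x : X | ∀ t : ℝ, 0 ≤ t → φ t x ∈ C} ∩ {x : X | ∀ t : ℝ, t ≤ 0 → φ t x ∈ C}) :=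
    ge_of_tendsto hilim (Filter.Eventually.of_forall fun n => hte (ψ n))
  rw [Metric.infDist_zero_of_mem hyK'] at hge
  linarith
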